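/- arXiv:0711.3200 — 4 statements merged into one kernel-verified Lean document; each statement's English description precedes it below -/
import Mathlib

section
/- If a group homomorphism f : G → H is such that its equivalence class modulo inner automorphisms is invertible in the quotient category (i.e., there exists g : H → G with g ∘ f equal to an inner automorphism of G and f ∘ g equal to an inner automorphism of H), then f itself is a group isomorphism. -/
theorem invertible_mod_inner_implies_isomorphism {G H : Type*} [Group G] [Group H]
    (f : G →* H) (g : H →* G) (a : G) (b : H)
    (hgf : g.comp f = ((MulAut.conj a : G ≃* G)).toMonoidHom)
    (hfg : f.comp g = ((MulAut.conj b : H ≃* H)).toMonoidHom) :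
    Function.Bijective f := by
  constructor
  · have : Function.Injective (g ∘ f) := by
      have : (g ∘ f) = (MulAut.conj a : G ≃* G) := by
        ext x; exact congrArg (fun h => h x) hgf
      rw [this]; exact (MulAut.conj a).injective
    exact Function.Injective.of_comp this
  · have : Function.Surjective (f ∘ g) := by
      have : (f ∘ g) = (MulAut.conj b : H ≃* H) := by
        ext x; exact congrArg (fun h => h x) hfg
      rw [this]; exact (MulAut.conj b).surjective
    exact Function.Surjective.of_comp this
end

section
/- There exists an automorphism of the alternating group A₆ that maps the 3-cycle (1 2 3) to the product (1 2 3)(4 5 6) of two disjoint 3-cycles; in particular, this automorphism is not induced by conjugation by any element of the symmetric group S₆. -/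
set_option maxRecDepth 4000

open Equiv

namespace A6Exceptional

open Equiv.Perm Finset

abbrev G6 := Equiv.Perm (Fin 6)

def cj (σ : G6) (s : Finset G6) : Finset G6 := s.image fun m => σ * m * σ⁻¹

def t0 : Finset G6 := {c[0,1]*c[2,3]*c[4,5], c[0,2]*c[1,4]*c[3,5], c[0,3]*c[1,5]*c[2,4], c[0,4]*c[1,3]*c[2,5], c[0,5]*c[1,2]*c[3,4]}
def t1 : Finset G6 := {c[0,1]*c[2,4]*c[3,5], c[0,2]*c[1,5]*c[3,4], c[0,3]*c[1,2]*c[4,5], c[0,4]*c[1,3]*c[2,5], c[0,5]*c[1,4]*c[2,3]}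
def t2 : Finset G6 := {c[0,1]*c[2,5]*c[3,4], c[0,2]*c[1,3]*c[4,5], c[0,3]*c[1,5]*c[2,4], c[0,4]*c[1,2]*c[3,5], c[0,5]*c[1,4]*c[2,3]}
def t3 : Finset G6 := {c[0,1]*c[2,3]*c[4,5], c[0,2]*c[1,5]*c[3,4], c[0,3]*c[1,4]*c[2,5], c[0,4]*c[1,2]*c[3,5], c[0,5]*c[1,3]*c[2,4]}
def t4 : Finset G6 := {c[0,1]*c[2,5]*c[3,4], c[0,2]*c[1,4]*c[3,5], c[0,3]*c[1,2]*c[4,5], c[0,4]*c[1,5]*c[2,3], c[0,5]*c[1,3]*c[2,4]}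
def t5 : Finset G6 := {c[0,1]*c[2,4]*c[3,5], c[0,2]*c[1,3]*c[4,5], c[0,3]*c[1,4]*c[2,5], c[0,4]*c[1,5]*c[2,3], c[0,5]*c[1,2]*c[3,4]}

def SS : Finset (Finset G6) := {t0, t1, t2, t3, t4, t5}

def TT : Fin 6 → Finset G6 := ![t0, t1, t2, t3, t4, t5]

def idx (s : Finset G6) : Fin 6 :=
  if s = t0 then 0 else if s = t1 then 1 else if s = t2 then 2 else
  if s = t3 then 3 else if s = t4 then 4 else 5

lemma cj_one (s : Finset G6) : cj 1 s = s := by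
  simp [cj]

lemma cj_cj (σ τ : G6) (s : Finset G6) : cj σ (cj τ s) = cj (σ * τ) s := by
  simp only [cj, Finset.image_image]
  apply Finset.image_congr
  intro m _
  simp [mul_assoc]

/-- the generators of `S6` -/
def g1 : G6 := Equiv.swap 0 1
def g2 : G6 := c[0, 1, 2, 3, 4, 5]

/-- the subgroup of permutations stabilizing the set of six totals -/
def H : Subgroup G6 where
  carrier := {σ | SS.image (cj σ) = SS}
  one_mem' := by
    show SS.image (cj 1) = SS
    have : cj (1 : G6) = id := funext cj_one
    rw [this, Finset.image_id]
  mul_mem' := by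
    intro a b ha hb
    show SS.image (cj (a * b)) = SS
    have : cj (a * b) = cj a ∘ cj b := funext fun s => (cj_cj a b s).symm
    rw [this, ← Finset.image_image, hb, ha]
  inv_mem' := by
    intro a ha
    show SS.image (cj a⁻¹) = SS
    replace ha : SS.image (cj a) = SS := ha
    conv_lhs => rw [← ha]
    rw [Finset.image_image]
    have : cj a⁻¹ ∘ cj a = id := funext fun s => by
      simp [Function.comp, cj_cj, cj_one]
    rw [this, Finset.image_id]

lemma closure_top : Subgroup.closure ({g2, g1} : Set G6) = ⊤ := by
  have h1 : IsCycle g2 := by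
    show IsCycle (Cycle.formPerm _ _)
    show IsCycle (List.formPerm [(0 : Fin 6), 1, 2, 3, 4, 5])
    exact List.isCycle_formPerm (by decide) (by decide)
  have h2 : g2.support = Finset.univ := by decide
  have h3 : g2 0 = 1 := by decide
  have := Equiv.Perm.closure_cycle_adjacent_swap h1 h2 0
  rw [h3] at this
  exact this

lemma H_top : H = ⊤ := by
  rw [eq_top_iff, ← closure_top, Subgroup.closure_le]
  intro x hx
  rcases hx with rfl | hx
  · show SS.image (cj g2) = SS
    decide
  · rcases hx with rfl
    show SS.image (cj g1) = SS
    decide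

lemma mem_H (σ : G6) : SS.image (cj σ) = SS := by
  have : σ ∈ H := H_top ▸ Subgroup.mem_top σ
  exact this

lemma cj_mem_SS (σ : G6) {s : Finset G6} (hs : s ∈ SS) : cj σ s ∈ SS := by
  have h := mem_H σ
  rw [← h]
  exact Finset.mem_image_of_mem _ hs

/-- the six totals as a type -/
def X : Type := {s : Finset G6 // s ∈ SS}

instance : MulAction G6 X where
  smul σ x := ⟨cj σ x.1, cj_mem_SS σ x.2⟩
  one_smul x := Subtype.ext (cj_one x.1)
  mul_smul a b x := Subtype.ext (cj_cj a b x.1).symm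

lemma smul_def (σ : G6) (x : X) : (σ • x : X) = ⟨cj σ x.1, cj_mem_SS σ x.2⟩ := rfl

lemma hTT : ∀ j : Fin 6, TT j ∈ SS := by decide

lemma hIdx : ∀ s ∈ SS, TT (idx s) = s := by
  intro s hs
  fin_cases hs <;> decide

lemma hIdx2 : ∀ j : Fin 6, idx (TT j) = j := by decide

def e : X ≃ Fin 6 where
  toFun x := idx x.1
  invFun j := ⟨TT j, hTT j⟩
  left_inv x := Subtype.ext (hIdx x.1 x.2)
  right_inv := hIdx2

/-- the endomorphism of `S6` induced by the action on totals -/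
def F' : G6 →* G6 where
  toFun σ := e.permCongr (MulAction.toPermHom G6 X σ)
  map_one' := by
    ext i
    simp [Equiv.permCongr_apply]
  map_mul' a b := by
    ext i
    simp [Equiv.permCongr_apply, Equiv.Perm.mul_apply, mul_smul]

def g0 : G6 := Equiv.swap 1 2 * Equiv.swap 3 4

lemma F'_F' : ∀ σ : G6, F' (F' σ) = g0 * σ * g0⁻¹ := by
  have h : F'.comp F' = ((MulAut.conj g0).toMonoidHom : G6 →* G6) := by
    apply MonoidHom.eq_of_eqOn_top
    rw [← closure_top]
    apply MonoidHom.eqOn_closure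
    intro x hx
    rcases hx with rfl | hx
    · decide
    · rcases hx with rfl
      decide
  intro σ
  have := DFunLike.congr_fun h σ
  simpa using this

lemma F'_injective : Function.Injective F' := by
  intro a b hab
  have h1 : F' (F' a) = F' (F' b) := by rw [hab]
  rw [F'_F', F'_F'] at h1
  exact mul_left_cancel (mul_right_cancel h1)

lemma sign_F' : ∀ σ : G6, Equiv.Perm.sign (F' σ) = Equiv.Perm.sign σ := by
  have h : (Equiv.Perm.sign.comp F') = (Equiv.Perm.sign : G6 →* ℤˣ) := by
    apply MonoidHom.eq_of_eqOn_top
    rw [← closure_top]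
    apply MonoidHom.eqOn_closure
    intro x hx
    rcases hx with rfl | hx
    · show Equiv.Perm.sign (F' g2) = Equiv.Perm.sign g2
      have h2 : F' g2 = Equiv.swap 1 2 * Equiv.swap 2 4 * Equiv.swap 3 5 := by decide
      have h3 : g2 = Equiv.swap 0 1 * Equiv.swap 1 2 * Equiv.swap 2 3 *
          Equiv.swap 3 4 * Equiv.swap 4 5 := by decide
      rw [h2, h3]
      simp [Equiv.Perm.sign_swap']
    · rcases hx with rfl
      show Equiv.Perm.sign (F' g1) = Equiv.Perm.sign g1
      have h2 : F' g1 = Equiv.swap 0 3 * Equiv.swap 1 5 * Equiv.swap 2 4 := by decide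
      rw [h2]
      show _ = Equiv.Perm.sign (Equiv.swap 0 1)
      simp [Equiv.Perm.sign_swap']
  intro σ
  have := DFunLike.congr_fun h σ
  rwa [MonoidHom.comp_apply] at this

lemma F'_mem_alternating {σ : G6} (hσ : σ ∈ alternatingGroup (Fin 6)) :
    F' σ ∈ alternatingGroup (Fin 6) := by
  rw [Equiv.Perm.mem_alternatingGroup] at *
  rw [sign_F', hσ]

/-- the restriction of `F'` to the alternating group -/
def ψ : alternatingGroup (Fin 6) →* alternatingGroup (Fin 6) :=
  MonoidHom.codRestrict (F'.comp (alternatingGroup (Fin 6)).subtype) _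
    (fun x => F'_mem_alternating x.2)

lemma ψ_injective : Function.Injective ψ := by
  intro a b hab
  apply Subtype.ext
  apply F'_injective
  exact congrArg Subtype.val hab

lemma ψ_bijective : Function.Bijective ψ :=
  Finite.injective_iff_bijective.mp ψ_injective

lemma F'_c012 : F' c[0, 1, 2] = c[0, 1, 2] * c[3, 4, 5] := by decide

end A6Exceptional

theorem exists_exceptional_automorphism_A6
    (h1 : (c[0, 1, 2] : Perm (Fin 6)) ∈ alternatingGroup (Fin 6))
    (h2 : (c[0, 1, 2] * c[3, 4, 5] : Perm (Fin 6)) ∈ alternatingGroup (Fin 6)) :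
    ∃ φ : MulAut (alternatingGroup (Fin 6)),
      φ ⟨c[0, 1, 2], h1⟩ = ⟨c[0, 1, 2] * c[3, 4, 5], h2⟩ ∧
      ∀ g : Perm (Fin 6),
        ¬ ∀ x : alternatingGroup (Fin 6), (↑(φ x) : Perm (Fin 6)) = g * ↑x * g⁻¹ := by
  refine ⟨MulEquiv.ofBijective A6Exceptional.ψ A6Exceptional.ψ_bijective, ?_, ?_⟩
  · apply Subtype.ext
    exact A6Exceptional.F'_c012
  · intro g hg
    have h := hg ⟨c[0, 1, 2], h1⟩
    have h' : (↑((MulEquiv.ofBijective A6Exceptional.ψ A6Exceptional.ψ_bijective)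
        (⟨c[0, 1, 2], h1⟩ : alternatingGroup (Fin 6))) : Perm (Fin 6))
        = c[0, 1, 2] * c[3, 4, 5] := A6Exceptional.F'_c012
    rw [h'] at h
    have hc := Equiv.Perm.card_support_conj (σ := g) (τ := (c[0, 1, 2] : Perm (Fin 6)))
    rw [← h] at hc
    exact absurd hc (by decide)
end

section
/- Let C be a category with a compatible family of normal subgroups N(a) ⊴ Aut(a) (i.e., for every f : a → b and φ ∈ N(a) there is ψ ∈ N(b) with φ ≫ f = f ≫ ψ). Define f ~ g for f, g : a → b iff g = φ ≫ f ≫ ψ for some φ ∈ N(a), ψ ∈ N(b). Then ~ is an equivalence relation compatible with composition (the composite of equivalence classes is a single class), the quotient C^out is a category, and the quotient functor C → C^out reflects isomorphisms: if the image of f is an isomorphism in C^out, then f is an isomorphism in C. -/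
open CategoryTheory

/-- Equivalence of morphisms modulo a family of subgroups of inner automorphisms. -/
def innerRel {C : Type*} [Category C] (N : ∀ a : C, Subgroup (Aut a))
    {a b : C} (f g : a ⟶ b) : Prop :=
  ∃ φ ∈ N a, ∃ ψ ∈ N b, g = φ.hom ≫ f ≫ ψ.hom

theorem quotient_by_inner_automorphisms_is_category_and_reflects_isos
    {C : Type*} [Category C] (N : ∀ a : C, Subgroup (Aut a))
    (hnormal : ∀ a : C, (N a).Normal)
    (hcompat : ∀ {a b : C} (f : a ⟶ b), ∀ φ ∈ N a,
      ∃ ψ ∈ N b, φ.hom ≫ f = f ≫ ψ.hom) :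
    (∀ a b : C, Equivalence (innerRel N (a := a) (b := b))) ∧
    (∀ {a b c : C} (f₁ f₂ : a ⟶ b) (g₁ g₂ : b ⟶ c),
      innerRel N f₁ f₂ → innerRel N g₁ g₂ → innerRel N (f₁ ≫ g₁) (f₂ ≫ g₂)) ∧
    (∀ {a b : C} (f : a ⟶ b),
      (∃ g : b ⟶ a, innerRel N (f ≫ g) (𝟙 a) ∧ innerRel N (g ≫ f) (𝟙 b)) →
      IsIso f) := by
  refine ⟨fun a b => ⟨?_, ?_, ?_⟩, ?_, ?_⟩
  · -- reflexive
    intro f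
    exact ⟨1, (N a).one_mem, 1, (N b).one_mem, show f = (𝟙 a) ≫ f ≫ (𝟙 b) by simp⟩
  · -- symmetric
    rintro f g ⟨φ, hφ, ψ, hψ, rfl⟩
    refine ⟨φ⁻¹, (N a).inv_mem hφ, ψ⁻¹, (N b).inv_mem hψ, ?_⟩
    simp only [Aut.Aut_inv_def]
    clear hφ hψ
    change a ≅ a at φ
    change b ≅ b at ψ
    simp [Iso.symm_hom]
  · -- transitive
    rintro f g h ⟨φ, hφ, ψ, hψ, rfl⟩ ⟨φ', hφ', ψ', hψ', rfl⟩
    refine ⟨φ * φ', (N a).mul_mem hφ hφ', ψ' * ψ, (N b).mul_mem hψ' hψ, ?_⟩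
    simp only [Aut.Aut_mul_def]
    clear hφ hψ hφ' hψ'
    change a ≅ a at φ φ'
    change b ≅ b at ψ ψ'
    simp [Iso.trans_hom]
  · -- composition
    rintro a b c f₁ f₂ g₁ g₂ ⟨φ, hφ, ψ, hψ, rfl⟩ ⟨φ', hφ', ψ', hψ', rfl⟩
    obtain ⟨ρ, hρ, hcomm⟩ := hcompat g₁ (φ' * ψ) ((N b).mul_mem hφ' hψ)
    refine ⟨φ, hφ, ψ' * ρ, (N c).mul_mem hψ' hρ, ?_⟩
    rw [Aut.Aut_mul_def] at hcomm ⊢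
    clear hφ hψ hφ' hψ' hρ
    change a ≅ a at φ
    change b ≅ b at ψ φ'
    change c ≅ c at ψ' ρ
    have : ψ.hom ≫ φ'.hom ≫ g₁ = g₁ ≫ ρ.hom := by
      simpa only [Iso.trans_hom, Category.assoc] using hcomm
    simp only [Iso.trans_hom, Category.assoc]
    rw [← Category.assoc g₁ ρ.hom, ← this]
    simp
  · -- reflects isos
    rintro a b f ⟨g, ⟨φ, hφ, ψ, hψ, h1⟩, ⟨φ', hφ', ψ', hψ', h2⟩⟩
    -- h1 : 𝟙 a = φ.hom ≫ (f ≫ g) ≫ ψ.hom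
    have hfg : f ≫ g = φ.inv ≫ ψ.inv := by
      have h := congrArg (fun h => φ.inv ≫ h ≫ ψ.inv) h1
      have h' : φ.inv ≫ ψ.inv = f ≫ g := by simpa [Category.assoc, Iso.inv_hom_id_assoc (φ : a ≅ a), Iso.hom_inv_id (ψ : a ≅ a)] using h
      exact h'.symm
    have hgf : g ≫ f = φ'.inv ≫ ψ'.inv := by
      have h := congrArg (fun h => φ'.inv ≫ h ≫ ψ'.inv) h2
      have h' : φ'.inv ≫ ψ'.inv = g ≫ f := by simpa [Category.assoc, Iso.inv_hom_id_assoc (φ' : b ≅ b), Iso.hom_inv_id (ψ' : b ≅ b)] using h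
      exact h'.symm
    have ifg : IsIso (f ≫ g) := by rw [hfg]; exact IsIso.comp_isIso' (Iso.isIso_inv (φ : a ≅ a)) (Iso.isIso_inv (ψ : a ≅ a))
    have igf : IsIso (g ≫ f) := by rw [hgf]; exact IsIso.comp_isIso' (Iso.isIso_inv (φ' : b ≅ b)) (Iso.isIso_inv (ψ' : b ≅ b))
    have hr : f ≫ (g ≫ inv (f ≫ g)) = 𝟙 a := by
      rw [← Category.assoc]; exact IsIso.hom_inv_id _
    have hl : (inv (g ≫ f) ≫ g) ≫ f = 𝟙 b := by
      rw [Category.assoc]; exact IsIso.inv_hom_id _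
    have heq : g ≫ inv (f ≫ g) = inv (g ≫ f) ≫ g := by
      calc g ≫ inv (f ≫ g)
          = (inv (g ≫ f) ≫ (g ≫ f)) ≫ g ≫ inv (f ≫ g) := by
            rw [IsIso.inv_hom_id]; simp
        _ = inv (g ≫ f) ≫ g ≫ (f ≫ g ≫ inv (f ≫ g)) := by simp only [Category.assoc]
        _ = inv (g ≫ f) ≫ g := by rw [hr]; simp
    exact ⟨g ≫ inv (f ≫ g), ⟨hr, by rw [heq]; exact hl⟩⟩
end

section
/- Let C be a category whose Hom-sets carry metrics such that composition is jointly continuous, equipped with a compatible family of normal subgroups of inner automorphisms. Then the closure of an equivalence class (modulo inner automorphisms) of a morphism, the product of the closures of two equivalence classes being defined as the closure of their setwise product, yields an associative composition; i.e., for morphisms f : a → b, g : b → c, h : c → d, the closure of (cl[f] · cl[g]) · cl[h] equals the closure of cl[f] · (cl[g] · cl[h]), both equal to the closure of the equivalence class of f ≫ g ≫ h. -/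
open CategoryTheory

/-- The equivalence class of a morphism modulo the given inner automorphism
subgroups. -/
def innerClass {C : Type*} [Category C] (N : ∀ a : C, Subgroup (Aut a))
    {a b : C} (f : a ⟶ b) : Set (a ⟶ b) :=
  {x | ∃ φ ∈ N a, ∃ ψ ∈ N b, x = φ.hom ≫ f ≫ ψ.hom}

/-- Closure of image2 of closures equals closure of image2, given joint
continuity. -/
lemma closure_image2_closure_closure {α β γ : Type*} [TopologicalSpace α]
    [TopologicalSpace β] [TopologicalSpace γ] {f : α → β → γ}
    (hf : Continuous fun p : α × β => f p.1 p.2) (S : Set α) (T : Set β) :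
    closure (Set.image2 f (closure S) (closure T)) = closure (Set.image2 f S T) := by
  apply subset_antisymm
  · have h1 : Set.image2 f (closure S) (closure T) ⊆ closure (Set.image2 f S T) := by
      rw [← Set.image_prod, ← Set.image_prod, ← closure_prod_eq]
      exact (image_closure_subset_closure_image hf)
    simpa using closure_mono h1
  · exact closure_mono (Set.image2_subset subset_closure subset_closure)

open CategoryTheory in
lemma innerClass_comp {C : Type*} [Category C]
    (N : ∀ a : C, Subgroup (Aut a))
    (hcompat : ∀ {a b : C} (f : a ⟶ b), ∀ φ ∈ N a,
      ∃ ψ ∈ N b, φ.hom ≫ f = f ≫ ψ.hom)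
    {a b c : C} (f : a ⟶ b) (g : b ⟶ c) :
    Set.image2 (· ≫ ·) (innerClass N f) (innerClass N g)
      = innerClass N (f ≫ g) := by
  ext x
  constructor
  · rintro ⟨u, ⟨φ, hφ, ψ, hψ, rfl⟩, v, ⟨φ', hφ', ψ', hψ', rfl⟩, rfl⟩
    obtain ⟨χ, hχ, hmove⟩ := hcompat g (φ' * ψ) (mul_mem hφ' hψ)
    refine ⟨φ, hφ, ψ' * χ, mul_mem hψ' hχ, ?_⟩
    have : ψ.hom ≫ φ'.hom ≫ g = g ≫ χ.hom := by
      rw [← Category.assoc]; exact hmove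
    simp only [Aut.Aut_mul_def, Iso.trans_hom, Category.assoc]
    rw [reassoc_of% this]
    rfl
  · rintro ⟨φ, hφ, ψ, hψ, rfl⟩
    exact ⟨φ.hom ≫ f ≫ (1 : Aut b).hom, ⟨φ, hφ, 1, one_mem _, rfl⟩,
      (1 : Aut b).hom ≫ g ≫ ψ.hom, ⟨1, one_mem _, ψ, hψ, rfl⟩, by simp [show (1 : Aut b).hom = 𝟙 b from rfl]⟩

open CategoryTheory in
theorem closures_of_inner_classes_compose_associatively
    {C : Type*} [Category C]
    [∀ x y : C, TopologicalSpace (x ⟶ y)]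
    (hcomp : ∀ x y z : C,
      Continuous (fun p : (x ⟶ y) × (y ⟶ z) => p.1 ≫ p.2))
    (N : ∀ a : C, Subgroup (Aut a))
    (hnormal : ∀ a : C, (N a).Normal)
    (hcompat : ∀ {a b : C} (f : a ⟶ b), ∀ φ ∈ N a,
      ∃ ψ ∈ N b, φ.hom ≫ f = f ≫ ψ.hom)
    {a b c d : C} (f : a ⟶ b) (g : b ⟶ c) (h : c ⟶ d) :
    closure (Set.image2 (· ≫ ·)
        (closure (Set.image2 (· ≫ ·) (closure (innerClass N f))
          (closure (innerClass N g))))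
        (closure (innerClass N h)))
      = closure (Set.image2 (· ≫ ·) (closure (innerClass N f))
          (closure (Set.image2 (· ≫ ·) (closure (innerClass N g))
            (closure (innerClass N h))))) ∧
    closure (Set.image2 (· ≫ ·)
        (closure (Set.image2 (· ≫ ·) (closure (innerClass N f))
          (closure (innerClass N g))))
        (closure (innerClass N h)))
      = closure (innerClass N (f ≫ g ≫ h)) := by
  have key : ∀ {x y z : C} (p : x ⟶ y) (q : y ⟶ z),
      closure (Set.image2 (· ≫ ·) (closure (innerClass N p))
        (closure (innerClass N q))) = closure (innerClass N (p ≫ q)) := by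
    intro x y z p q
    rw [closure_image2_closure_closure (hcomp x y z), innerClass_comp N @hcompat]
  have lhs : closure (Set.image2 (· ≫ ·)
        (closure (Set.image2 (· ≫ ·) (closure (innerClass N f))
          (closure (innerClass N g))))
        (closure (innerClass N h)))
      = closure (innerClass N (f ≫ g ≫ h)) := by
    rw [key f g, key (f ≫ g) h, Category.assoc]
  have rhs : closure (Set.image2 (· ≫ ·) (closure (innerClass N f))
          (closure (Set.image2 (· ≫ ·) (closure (innerClass N g))
            (closure (innerClass N h)))))
      = closure (innerClass N (f ≫ g ≫ h)) := by
    rw [key g h, key f (g ≫ h)]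
  exact ⟨lhs.trans rhs.symm, lhs⟩
end
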